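/- Let L be a finite lattice and θ = θ_{S₁,…,Sₖ} an interval relation on L. Then ≤_θ is a partial order on L/θ if and only if there is no Penrose crown among the intervals S₁,…,Sₖ, i.e., there are no indices i₁,…,i_l (l ≥ 2) such that min(S_{i₁}) ∈ S_{i₂}↓, min(S_{i₂}) ∈ S_{i₃}↓, …, min(S_{i_{l-1}}) ∈ S_{i_l}↓, and min(S_{i_l}) ∈ S_{i₁}↓. -/

import Mathlib

open Classical

variable {L : Type*}

/-- The interval relation `θ_{S₁,…,Sₖ}` for the pairwise disjoint intervals
`Sᵢ = [u i, v i]`. -/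
def mrel [Preorder L] {k : ℕ} (u v : Fin k → L) (x y : L) : Prop :=
  x = y ∨ ∃ i, x ∈ Set.Icc (u i) (v i) ∧ y ∈ Set.Icc (u i) (v i)

/-- `θ_{S₁,…,Sₖ}` as a setoid (the intervals must be pairwise disjoint). -/
def mrelSetoid [Preorder L] {k : ℕ} (u v : Fin k → L)
    (hdisj : Pairwise fun i j => Disjoint (Set.Icc (u i) (v i)) (Set.Icc (u j) (v j))) :
    Setoid L where
  r := mrel u v
  iseqv := by
    constructor
    · intro x; exact Or.inl rfl
    · rintro x y (rfl | ⟨i, hx, hy⟩)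
      · exact Or.inl rfl
      · exact Or.inr ⟨i, hy, hx⟩
    · rintro x y z (rfl | ⟨i, hx, hy⟩) h
      · exact h
      · rcases h with rfl | ⟨j, hy', hz⟩
        · exact Or.inr ⟨i, hx, hy⟩
        · rcases eq_or_ne i j with rfl | hij
          · exact Or.inr ⟨i, hx, hz⟩
          · exact ((Set.disjoint_left.mp (hdisj hij) hy) hy').elim

/-- `x_θ`, the least element of the class of `x`. -/
noncomputable def mlow [Preorder L] {k : ℕ} (u v : Fin k → L) (x : L) : L :=
  if h : ∃ i, x ∈ Set.Icc (u i) (v i) then u (Classical.choose h) else x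

/-- `x^θ`, the greatest element of the class of `x`. -/
noncomputable def mhigh [Preorder L] {k : ℕ} (u v : Fin k → L) (x : L) : L :=
  if h : ∃ i, x ∈ Set.Icc (u i) (v i) then v (Classical.choose h) else x

/-- `Sᵢ↓`, the elements outside `Sᵢ` strictly below some element of `Sᵢ`. -/
def mSdown [Preorder L] {k : ℕ} (u v : Fin k → L) (i : Fin k) : Set L :=
  {z | z ∉ Set.Icc (u i) (v i) ∧ ∃ s ∈ Set.Icc (u i) (v i), z < s}

/-- `Sᵢ↑`, the elements outside `Sᵢ` strictly above some element of `Sᵢ`. -/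
def mSup [Preorder L] {k : ℕ} (u v : Fin k → L) (i : Fin k) : Set L :=
  {z | z ∉ Set.Icc (u i) (v i) ∧ ∃ s ∈ Set.Icc (u i) (v i), s < z}

/-- The relation `≤_θ` on representatives: `x_θ ≤ y^θ` or a chain of intervals connects
the class of `x` to the class of `y` through the intervals' strict down- and up-sets. -/
def mle [Preorder L] {k : ℕ} (u v : Fin k → L) (x y : L) : Prop :=
  mlow u v x ≤ mhigh u v y ∨
    ∃ (n : ℕ) (c : Fin (n + 1) → Fin k),
      mlow u v x ∈ mSdown u v (c 0) ∧
      (∀ j : Fin n, u (c j.castSucc) ∈ mSdown u v (c j.succ)) ∧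
      mhigh u v y ∈ mSup u v (c (Fin.last n))

/-- The induced relation `≤_θ` on the factor set `L/θ`. -/
def mLeQ [Preorder L] {k : ℕ} (u v : Fin k → L)
    (hdisj : Pairwise fun i j => Disjoint (Set.Icc (u i) (v i)) (Set.Icc (u j) (v j)))
    (a b : Quotient (mrelSetoid u v hdisj)) : Prop :=
  ∃ x y : L, a = Quotient.mk (mrelSetoid u v hdisj) x ∧
    b = Quotient.mk (mrelSetoid u v hdisj) y ∧ mle u v x y


def mR [Preorder L] {k : ℕ} (u v : Fin k → L) (a b : Fin k) : Prop := u a ∈ mSdown u v b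

section Aux
variable [Lattice L] {k : ℕ} {u v : Fin k → L}

lemma interval_eq (hdisj : Pairwise fun i j => Disjoint (Set.Icc (u i) (v i)) (Set.Icc (u j) (v j)))
    {x : L} {i j : Fin k} (h1 : x ∈ Set.Icc (u i) (v i)) (h2 : x ∈ Set.Icc (u j) (v j)) : i = j := by
  by_contra hne
  exact Set.disjoint_left.mp (hdisj hne) h1 h2

lemma mem_mSdown_iff {z : L} {i : Fin k} :
    z ∈ mSdown u v i ↔ z ∉ Set.Icc (u i) (v i) ∧ z ⊔ u i ≤ v i := by
  constructor
  · rintro ⟨hz, s, hs, hlt⟩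
    have hs' := Set.mem_Icc.1 hs
    exact ⟨hz, (sup_le hlt.le hs'.1).trans hs'.2⟩
  · rintro ⟨hz, hle⟩
    refine ⟨hz, z ⊔ u i, Set.mem_Icc.2 ⟨le_sup_right, hle⟩, lt_of_le_of_ne le_sup_left ?_⟩
    intro e
    exact hz (Set.mem_Icc.2 ⟨by rw [e]; exact le_sup_right, le_sup_left.trans hle⟩)

lemma mem_mSup_iff {z : L} {i : Fin k} :
    z ∈ mSup u v i ↔ z ∉ Set.Icc (u i) (v i) ∧ u i ≤ z ⊓ v i := by
  constructor
  · rintro ⟨hz, s, hs, hlt⟩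
    have hs' := Set.mem_Icc.1 hs
    exact ⟨hz, le_inf (hs'.1.trans hlt.le) (hs'.1.trans hs'.2)⟩
  · rintro ⟨hz, hle⟩
    refine ⟨hz, z ⊓ v i, Set.mem_Icc.2 ⟨hle, inf_le_right⟩, lt_of_le_of_ne inf_le_left ?_⟩
    intro e
    exact hz (Set.mem_Icc.2 ⟨hle.trans inf_le_left, by rw [← e]; exact inf_le_right⟩)

section Aux2
variable [Lattice L] {k : ℕ} {u v : Fin k → L}

lemma mlow_of_mem (hdisj : Pairwise fun i j => Disjoint (Set.Icc (u i) (v i)) (Set.Icc (u j) (v j)))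
    {x : L} {i : Fin k} (hx : x ∈ Set.Icc (u i) (v i)) : mlow u v x = u i := by
  have h : ∃ j, x ∈ Set.Icc (u j) (v j) := ⟨i, hx⟩
  rw [mlow, dif_pos h]
  congr 1
  exact interval_eq hdisj (Classical.choose_spec h) hx

lemma mhigh_of_mem (hdisj : Pairwise fun i j => Disjoint (Set.Icc (u i) (v i)) (Set.Icc (u j) (v j)))
    {x : L} {i : Fin k} (hx : x ∈ Set.Icc (u i) (v i)) : mhigh u v x = v i := by
  have h : ∃ j, x ∈ Set.Icc (u j) (v j) := ⟨i, hx⟩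
  rw [mhigh, dif_pos h]
  congr 1
  exact interval_eq hdisj (Classical.choose_spec h) hx

lemma mlow_of_not {x : L} (h : ¬ ∃ i, x ∈ Set.Icc (u i) (v i)) : mlow u v x = x := by
  rw [mlow, dif_neg h]

lemma mhigh_of_not {x : L} (h : ¬ ∃ i, x ∈ Set.Icc (u i) (v i)) : mhigh u v x = x := by
  rw [mhigh, dif_neg h]

lemma mem_of_mlow_mem (hdisj : Pairwise fun i j => Disjoint (Set.Icc (u i) (v i)) (Set.Icc (u j) (v j)))
    {x : L} {i : Fin k} (h : mlow u v x ∈ Set.Icc (u i) (v i)) : x ∈ Set.Icc (u i) (v i) := by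
  by_cases hx : ∃ j, x ∈ Set.Icc (u j) (v j)
  · obtain ⟨j, hj⟩ := hx
    rw [mlow_of_mem hdisj hj] at h
    have hj' := Set.mem_Icc.1 hj
    have : j = i := interval_eq hdisj (Set.mem_Icc.2 ⟨le_rfl, hj'.1.trans hj'.2⟩) h
    exact this ▸ hj
  · rwa [mlow_of_not hx] at h

lemma mem_of_mhigh_mem (hdisj : Pairwise fun i j => Disjoint (Set.Icc (u i) (v i)) (Set.Icc (u j) (v j)))
    {x : L} {i : Fin k} (h : mhigh u v x ∈ Set.Icc (u i) (v i)) : x ∈ Set.Icc (u i) (v i) := by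
  by_cases hx : ∃ j, x ∈ Set.Icc (u j) (v j)
  · obtain ⟨j, hj⟩ := hx
    rw [mhigh_of_mem hdisj hj] at h
    have hj' := Set.mem_Icc.1 hj
    have : j = i := interval_eq hdisj (Set.mem_Icc.2 ⟨hj'.1.trans hj'.2, le_rfl⟩) h
    exact this ▸ hj
  · rwa [mhigh_of_not hx] at h

lemma mlow_le_mhigh (hIcc : ∀ i, u i ≤ v i)
    (hdisj : Pairwise fun i j => Disjoint (Set.Icc (u i) (v i)) (Set.Icc (u j) (v j)))
    (x : L) : mlow u v x ≤ mhigh u v x := by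
  by_cases hx : ∃ j, x ∈ Set.Icc (u j) (v j)
  · obtain ⟨j, hj⟩ := hx
    rw [mlow_of_mem hdisj hj, mhigh_of_mem hdisj hj]
    exact hIcc j
  · rw [mlow_of_not hx, mhigh_of_not hx]

lemma mrel_symm {x y : L} (h : mrel u v x y) : mrel u v y x := by
  rcases h with rfl | ⟨i, h1, h2⟩
  · exact Or.inl rfl
  · exact Or.inr ⟨i, h2, h1⟩

lemma mlow_congr (hdisj : Pairwise fun i j => Disjoint (Set.Icc (u i) (v i)) (Set.Icc (u j) (v j)))
    {x y : L} (h : mrel u v x y) : mlow u v x = mlow u v y := by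
  rcases h with rfl | ⟨i, hx, hy⟩
  · rfl
  · rw [mlow_of_mem hdisj hx, mlow_of_mem hdisj hy]

lemma mhigh_congr (hdisj : Pairwise fun i j => Disjoint (Set.Icc (u i) (v i)) (Set.Icc (u j) (v j)))
    {x y : L} (h : mrel u v x y) : mhigh u v x = mhigh u v y := by
  rcases h with rfl | ⟨i, hx, hy⟩
  · rfl
  · rw [mhigh_of_mem hdisj hx, mhigh_of_mem hdisj hy]

lemma mle_congr (hdisj : Pairwise fun i j => Disjoint (Set.Icc (u i) (v i)) (Set.Icc (u j) (v j)))
    {x x' y y' : L} (hx : mrel u v x x') (hy : mrel u v y y') :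
    mle u v x y ↔ mle u v x' y' := by
  unfold mle
  rw [mlow_congr hdisj hx, mhigh_congr hdisj hy]

lemma eq_of_u_mem (hIcc : ∀ i, u i ≤ v i)
    (hdisj : Pairwise fun i j => Disjoint (Set.Icc (u i) (v i)) (Set.Icc (u j) (v j)))
    {p t : Fin k} (h : u p ∈ Set.Icc (u t) (v t)) : p = t :=
  interval_eq hdisj (Set.mem_Icc.2 ⟨le_rfl, hIcc p⟩) h

lemma eq_of_v_mem (hIcc : ∀ i, u i ≤ v i)
    (hdisj : Pairwise fun i j => Disjoint (Set.Icc (u i) (v i)) (Set.Icc (u j) (v j)))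
    {p t : Fin k} (h : v p ∈ Set.Icc (u t) (v t)) : p = t :=
  interval_eq hdisj (Set.mem_Icc.2 ⟨hIcc p, le_rfl⟩) h

lemma mR_intro (hIcc : ∀ i, u i ≤ v i)
    (hdisj : Pairwise fun i j => Disjoint (Set.Icc (u i) (v i)) (Set.Icc (u j) (v j)))
    {p t : Fin k} (hne : p ≠ t) (hle : u p ≤ v t) : mR u v p t :=
  mem_mSdown_iff.2 ⟨fun h => hne (eq_of_u_mem hIcc hdisj h), sup_le hle (hIcc t)⟩

lemma mR_of_sup (hIcc : ∀ i, u i ≤ v i)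
    (hdisj : Pairwise fun i j => Disjoint (Set.Icc (u i) (v i)) (Set.Icc (u j) (v j)))
    {t j : Fin k} (h : v t ∈ mSup u v j) : mR u v j t := by
  have hch := mem_mSup_iff.1 h
  refine mR_intro hIcc hdisj ?_ (hch.2.trans inf_le_left)
  rintro rfl
  exact hch.1 (Set.mem_Icc.2 ⟨hIcc j, le_rfl⟩)

lemma mR_irrefl (hIcc : ∀ i, u i ≤ v i) (a : Fin k) : ¬ mR u v a a :=
  fun h => h.1 (Set.mem_Icc.2 ⟨le_rfl, hIcc a⟩)

end Aux2

section Aux3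
set_option linter.unusedSectionVars false
variable [Lattice L] {k : ℕ} {u v : Fin k → L}

lemma rtg_aux {g : ℕ → Fin k} {n : ℕ} (h : ∀ t, t < n → mR u v (g t) (g (t + 1))) :
    Relation.ReflTransGen (mR u v) (g 0) (g n) := by
  induction n with
  | zero => exact .refl
  | succ n ih => exact (ih fun t ht => h t (by omega)).tail (h n (by omega))

lemma chain_to_rtg {n : ℕ} {c : Fin (n + 1) → Fin k}
    (h : ∀ j : Fin n, u (c j.castSucc) ∈ mSdown u v (c j.succ)) :
    Relation.ReflTransGen (mR u v) (c 0) (c (Fin.last n)) := by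
  have hg : ∀ t, t < n → mR u v
      (c ⟨min t n, Nat.lt_succ_of_le (min_le_right t n)⟩)
      (c ⟨min (t + 1) n, Nat.lt_succ_of_le (min_le_right (t + 1) n)⟩) := by
    intro t ht
    have e1 : (⟨min t n, Nat.lt_succ_of_le (min_le_right t n)⟩ : Fin (n + 1)) =
        (⟨t, ht⟩ : Fin n).castSucc := by
      apply Fin.ext; simp; omega
    have e2 : (⟨min (t + 1) n, Nat.lt_succ_of_le (min_le_right (t + 1) n)⟩ : Fin (n + 1)) =
        (⟨t, ht⟩ : Fin n).succ := by
      apply Fin.ext; simp; omega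
    rw [e1, e2]
    exact h ⟨t, ht⟩
  have h0 : (⟨min 0 n, Nat.lt_succ_of_le (min_le_right 0 n)⟩ : Fin (n + 1)) = 0 := by
    apply Fin.ext; simp
  have hn : (⟨min n n, Nat.lt_succ_of_le (min_le_right n n)⟩ : Fin (n + 1)) = Fin.last n := by
    apply Fin.ext; simp
  have := rtg_aux (g := fun t => c ⟨min t n, Nat.lt_succ_of_le (min_le_right t n)⟩) hg
  simpa only [h0, hn] using this

lemma rtg_to_chain {i j : Fin k} (h : Relation.ReflTransGen (mR u v) i j) :
    ∃ (n : ℕ) (c : Fin (n + 1) → Fin k), c 0 = i ∧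
      (∀ t : Fin n, u (c t.castSucc) ∈ mSdown u v (c t.succ)) ∧ c (Fin.last n) = j := by
  obtain ⟨l, hchain, hlast⟩ := List.exists_isChain_cons_of_relationReflTransGen h
  have hch : List.IsChain (mR u v) (i :: l) := hchain
  rw [List.isChain_iff_getElem] at hch
  refine ⟨l.length, fun t => (i :: l).get ⟨t.val, by simp only [List.length_cons]; exact t.isLt⟩,
    by simp, ?_, ?_⟩
  · intro t
    have := hch t.val (by simp only [List.length_cons]; omega)
    simpa [mR] using this
  · rw [List.getLast_eq_getElem] at hlast
    simp only [List.length_cons, Nat.add_sub_cancel] at hlast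
    simp only [Fin.val_last]
    exact hlast

lemma mle_iff_rtg {x y : L} :
    mle u v x y ↔ mlow u v x ≤ mhigh u v y ∨
      ∃ i j, mlow u v x ∈ mSdown u v i ∧ Relation.ReflTransGen (mR u v) i j ∧
        mhigh u v y ∈ mSup u v j := by
  constructor
  · rintro (h | ⟨n, c, h0, hc, hl⟩)
    · exact Or.inl h
    · exact Or.inr ⟨c 0, c (Fin.last n), h0, chain_to_rtg hc, hl⟩
  · rintro (h | ⟨i, j, hi, hij, hj⟩)
    · exact Or.inl h
    · obtain ⟨n, c, hc0, hcm, hcl⟩ := rtg_to_chain hij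
      exact Or.inr ⟨n, c, hc0.symm ▸ hi, hcm, hcl.symm ▸ hj⟩

lemma mod_succ_eq {n p r : ℕ} (hp : 0 < p) (hr : n % p = r) :
    (n + 1) % p = if r + 1 = p then 0 else r + 1 := by
  have hn : r + p * (n / p) = n := by rw [← hr]; exact Nat.mod_add_div n p
  have hrlt : r < p := by rw [← hr]; exact Nat.mod_lt _ hp
  rcases Nat.lt_or_ge (r + 1) p with h | h
  · rw [if_neg (by omega)]
    have h2 : n + 1 = (r + 1) + p * (n / p) := by omega
    rw [h2, Nat.add_mul_mod_self_left, Nat.mod_eq_of_lt h]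
  · have he : r + 1 = p := by omega
    rw [if_pos he]
    have h2 : n + 1 = p * (n / p) + p := by omega
    rw [h2, Nat.mul_add_mod, Nat.mod_self]

lemma crown_of_transGen (hIcc : ∀ i, u i ≤ v i)
    {i : Fin k} (h : Relation.TransGen (mR u v) i i) :
    ∃ (m : ℕ) (c : Fin (m + 2) → Fin k), Function.Injective c ∧
      ∀ j : Fin (m + 2), u (c j) ∈ mSdown u v (c (j + 1)) := by
  have hex : ∃ q, 0 < q ∧ ∃ f : ℕ → Fin k, (∀ n, f (n + q) = f n) ∧
      ∀ n, mR u v (f n) (f (n + 1)) := by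
    obtain ⟨b, hib, hbi⟩ := (Relation.TransGen.head'_iff).mp h
    obtain ⟨l, hchain, hlast⟩ := List.exists_isChain_cons_of_relationReflTransGen hbi
    set L0 : List (Fin k) := i :: b :: l with hL0
    have hch : List.IsChain (mR u v) L0 := List.IsChain.cons_cons hib hchain
    rw [List.isChain_iff_getElem] at hch
    set p := l.length + 1 with hp
    have hplen : p < L0.length := by simp [hL0, hp]
    have hgp : L0.getD p i = i := by
      rw [List.getLast_eq_getElem] at hlast
      simp only [List.length_cons, Nat.add_sub_cancel] at hlast
      rw [hL0, hp, List.getD_cons_succ, List.getD_eq_getElem _ _ (by simp)]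
      exact hlast
    have hg0 : L0.getD 0 i = i := by simp [hL0]
    have edge : ∀ t, t < p → mR u v (L0.getD t i) (L0.getD (t + 1) i) := by
      intro t ht
      have h1 : t < L0.length := by simp only [hL0, List.length_cons]; omega
      have h2 : t + 1 < L0.length := by simp only [hL0, List.length_cons]; omega
      rw [List.getD_eq_getElem _ _ h1, List.getD_eq_getElem _ _ h2]
      exact hch t (by simp only [hL0, List.length_cons]; omega)
    refine ⟨p, Nat.succ_pos _, fun n => L0.getD (n % p) i, ?_, ?_⟩
    · intro n
      show L0.getD ((n + p) % p) i = L0.getD (n % p) i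
      rw [Nat.add_mod_right]
    · intro n
      show mR u v (L0.getD (n % p) i) (L0.getD ((n + 1) % p) i)
      have hr : n % p < p := Nat.mod_lt _ (Nat.succ_pos _)
      have e := mod_succ_eq (Nat.succ_pos _) (rfl : n % p = n % p)
      by_cases hcase : n % p + 1 = p
      · rw [if_pos hcase] at e
        have e3 : L0.getD ((n + 1) % p) i = L0.getD (n % p + 1) i := by
          rw [e, hcase, hg0, hgp]
        rw [e3]
        exact edge _ hr
      · rw [if_neg hcase] at e
        rw [e]
        exact edge _ hr
  set q0 := Nat.find hex with hq0
  obtain ⟨hq0pos, f, hper, hchain⟩ := Nat.find_spec hex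
  have fadd : ∀ t n, f (n + t * q0) = f n := by
    intro t
    induction t with
    | zero => intro n; simp
    | succ t ih =>
      intro n
      have h1 : n + (t + 1) * q0 = (n + t * q0) + q0 := by ring
      rw [h1, hper, ih]
  have fmod : ∀ n, f n = f (n % q0) := by
    intro n
    have h1 : n % q0 + (n / q0) * q0 = n := by
      rw [Nat.mul_comm]; exact Nat.mod_add_div n q0
    conv_lhs => rw [← h1]
    exact fadd _ _
  have hq1 : q0 ≠ 1 := by
    intro h1
    have hc := hchain 0
    have e : f (0 + 1) = f 0 := by rw [← h1]; exact hper 0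
    rw [e] at hc
    exact mR_irrefl hIcc _ hc
  obtain ⟨m, hm⟩ : ∃ m, q0 = m + 2 := ⟨q0 - 2, by omega⟩
  have aux : ∀ a b : ℕ, a < b → b < q0 → f a = f b → False := by
    intro a b hab hb hfab
    set d := b - a with hd
    have hd0 : 0 < d := by omega
    have hdlt : d < q0 := by omega
    have hQ : 0 < d ∧ ∃ g : ℕ → Fin k, (∀ n, g (n + d) = g n) ∧
        ∀ n, mR u v (g n) (g (n + 1)) := by
      refine ⟨hd0, fun n => f (a + n % d), ?_, ?_⟩
      · intro n
        show f (a + (n + d) % d) = f (a + n % d)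
        rw [Nat.add_mod_right]
      · intro n
        show mR u v (f (a + n % d)) (f (a + (n + 1) % d))
        have hr : n % d < d := Nat.mod_lt _ hd0
        have e := mod_succ_eq hd0 (rfl : n % d = n % d)
        by_cases hcase : n % d + 1 = d
        · rw [if_pos hcase] at e
          have e2 : f (a + (n + 1) % d) = f ((a + n % d) + 1) := by
            rw [e]
            have h3 : (a + n % d) + 1 = b := by omega
            rw [h3, ← hfab]
            rfl
          rw [e2]
          exact hchain (a + n % d)
        · rw [if_neg hcase] at e
          have h3 : a + (n % d + 1) = (a + n % d) + 1 := by omega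
          rw [e, h3]
          exact hchain (a + n % d)
    exact Nat.find_min hex (by rw [← hq0]; exact hdlt) hQ
  refine ⟨m, fun j => f j.val, ?_, ?_⟩
  · intro a b hab
    by_contra hne
    rcases lt_trichotomy a.val b.val with hlt | heq | hgt
    · exact aux a.val b.val hlt (by rw [hm]; exact b.isLt) hab
    · exact hne (Fin.ext heq)
    · exact aux b.val a.val hgt (by rw [hm]; exact a.isLt) hab.symm
  · intro j
    show u (f j.val) ∈ mSdown u v (f ((j + 1 : Fin (m + 2)).val))
    have e1 : ((j + 1 : Fin (m + 2))).val = (j.val + 1) % (m + 2) := by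
      rw [Fin.add_def]
      simp
    have e2 : ∀ t : ℕ, f ((t + 1) % (m + 2)) = f (t + 1) := by
      intro t
      rw [← hm]
      exact (fmod _).symm
    rw [e1, e2 j.val]
    exact hchain j.val

end Aux3

section Aux4
set_option linter.unusedSectionVars false
variable [Lattice L] {k : ℕ} {u v : Fin k → L}

lemma bridge1 (hIcc : ∀ i, u i ≤ v i)
    (hdisj : Pairwise fun i j => Disjoint (Set.Icc (u i) (v i)) (Set.Icc (u j) (v j)))
    {w : L} {j i' : Fin k}
    (hwj : mhigh u v w ∈ mSup u v j) (hwi : mlow u v w ∈ mSdown u v i') :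
    Relation.TransGen (mR u v) j i' := by
  by_cases hw : ∃ t, w ∈ Set.Icc (u t) (v t)
  · obtain ⟨t, hwt⟩ := hw
    rw [mhigh_of_mem hdisj hwt] at hwj
    rw [mlow_of_mem hdisj hwt] at hwi
    exact Relation.TransGen.head (mR_of_sup hIcc hdisj hwj) (Relation.TransGen.single hwi)
  · rw [mhigh_of_not hw] at hwj
    rw [mlow_of_not hw] at hwi
    obtain ⟨hw1, hw2⟩ := mem_mSup_iff.1 hwj
    obtain ⟨hw3, hw4⟩ := mem_mSdown_iff.1 hwi
    refine Relation.TransGen.single (mR_intro hIcc hdisj ?_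
      ((hw2.trans inf_le_left).trans (le_sup_left.trans hw4)))
    rintro rfl
    exact hw3 (Set.mem_Icc.2 ⟨hw2.trans inf_le_left, le_sup_left.trans hw4⟩)

lemma bridge2 (hIcc : ∀ i, u i ≤ v i)
    (hdisj : Pairwise fun i j => Disjoint (Set.Icc (u i) (v i)) (Set.Icc (u j) (v j)))
    {x y : L} {i j : Fin k}
    (h1 : mlow u v y ≤ mhigh u v x) (hxi : mlow u v x ∈ mSdown u v i)
    (hyj : mhigh u v y ∈ mSup u v j) :
    Relation.TransGen (mR u v) j i ∨ mrel u v x y := by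
  by_cases hx : ∃ p, x ∈ Set.Icc (u p) (v p)
  · obtain ⟨p, hxp⟩ := hx
    rw [mlow_of_mem hdisj hxp] at hxi
    rw [mhigh_of_mem hdisj hxp] at h1
    by_cases hy : ∃ t, y ∈ Set.Icc (u t) (v t)
    · obtain ⟨t, hyt⟩ := hy
      rw [mlow_of_mem hdisj hyt] at h1
      rw [mhigh_of_mem hdisj hyt] at hyj
      rcases eq_or_ne t p with rfl | htp
      · exact Or.inr (Or.inr ⟨t, hxp, hyt⟩)
      · exact Or.inl (Relation.TransGen.head (mR_of_sup hIcc hdisj hyj)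
          (Relation.TransGen.head (mR_intro hIcc hdisj htp h1) (Relation.TransGen.single hxi)))
    · rw [mlow_of_not hy] at h1
      rw [mhigh_of_not hy] at hyj
      obtain ⟨hy1, hy2⟩ := mem_mSup_iff.1 hyj
      refine Or.inl (Relation.TransGen.head (mR_intro hIcc hdisj ?_
        ((hy2.trans inf_le_left).trans h1)) (Relation.TransGen.single hxi))
      rintro rfl
      exact hy1 (Set.mem_Icc.2 ⟨hy2.trans inf_le_left, h1⟩)
  · rw [mlow_of_not hx] at hxi
    rw [mhigh_of_not hx] at h1
    obtain ⟨hx1, hx2⟩ := mem_mSdown_iff.1 hxi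
    by_cases hy : ∃ t, y ∈ Set.Icc (u t) (v t)
    · obtain ⟨t, hyt⟩ := hy
      rw [mlow_of_mem hdisj hyt] at h1
      rw [mhigh_of_mem hdisj hyt] at hyj
      refine Or.inl (Relation.TransGen.head (mR_of_sup hIcc hdisj hyj)
        (Relation.TransGen.single (mR_intro hIcc hdisj ?_
          (h1.trans (le_sup_left.trans hx2)))))
      rintro rfl
      exact hx1 (Set.mem_Icc.2 ⟨h1, le_sup_left.trans hx2⟩)
    · rw [mlow_of_not hy] at h1
      rw [mhigh_of_not hy] at hyj
      obtain ⟨hy1, hy2⟩ := mem_mSup_iff.1 hyj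
      refine Or.inl (Relation.TransGen.single (mR_intro hIcc hdisj ?_
        ((hy2.trans inf_le_left).trans (h1.trans (le_sup_left.trans hx2)))))
      rintro rfl
      exact hx1 (Set.mem_Icc.2 ⟨(hy2.trans inf_le_left).trans h1, le_sup_left.trans hx2⟩)

lemma mle_trans (hIcc : ∀ i, u i ≤ v i)
    (hdisj : Pairwise fun i j => Disjoint (Set.Icc (u i) (v i)) (Set.Icc (u j) (v j)))
    {x y z : L} (h1 : mle u v x y) (h2 : mle u v y z) : mle u v x z := by
  rw [mle_iff_rtg] at h1 h2 ⊢
  rcases h1 with h1 | ⟨i, j, hxi, hij, hyj⟩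
  · rcases h2 with h2 | ⟨i', j', hyi', hij', hzj'⟩
    · by_cases hy : ∃ t, y ∈ Set.Icc (u t) (v t)
      · obtain ⟨t, hyt⟩ := hy
        rw [mhigh_of_mem hdisj hyt] at h1
        rw [mlow_of_mem hdisj hyt] at h2
        by_cases hxt : mlow u v x ∈ Set.Icc (u t) (v t)
        · left
          rw [mlow_of_mem hdisj (mem_of_mlow_mem hdisj hxt)]
          exact h2
        · by_cases hzt : mhigh u v z ∈ Set.Icc (u t) (v t)
          · left
            rw [mhigh_of_mem hdisj (mem_of_mhigh_mem hdisj hzt)]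
            exact h1
          · exact Or.inr ⟨t, t, mem_mSdown_iff.2 ⟨hxt, sup_le h1 (hIcc t)⟩, .refl,
              mem_mSup_iff.2 ⟨hzt, le_inf h2 (hIcc t)⟩⟩
      · rw [mhigh_of_not hy] at h1
        rw [mlow_of_not hy] at h2
        exact Or.inl (h1.trans h2)
    · by_cases hy : ∃ t, y ∈ Set.Icc (u t) (v t)
      · obtain ⟨t, hyt⟩ := hy
        rw [mhigh_of_mem hdisj hyt] at h1
        rw [mlow_of_mem hdisj hyt] at hyi'
        by_cases hxt : mlow u v x ∈ Set.Icc (u t) (v t)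
        · refine Or.inr ⟨i', j', ?_, hij', hzj'⟩
          rw [mlow_of_mem hdisj (mem_of_mlow_mem hdisj hxt)]
          exact hyi'
        · exact Or.inr ⟨t, j', mem_mSdown_iff.2 ⟨hxt, sup_le h1 (hIcc t)⟩,
            Relation.ReflTransGen.head hyi' hij', hzj'⟩
      · rw [mhigh_of_not hy] at h1
        rw [mlow_of_not hy] at hyi'
        obtain ⟨hy3, hy4⟩ := mem_mSdown_iff.1 hyi'
        by_cases hxi' : mlow u v x ∈ Set.Icc (u i') (v i')
        · have hlx : mlow u v x = u i' := mlow_of_mem hdisj (mem_of_mlow_mem hdisj hxi')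
          rcases hij'.cases_head with rfl | ⟨i2, hR, hrtg⟩
          · left
            rw [hlx]
            exact (mem_mSup_iff.1 hzj').2.trans inf_le_left
          · refine Or.inr ⟨i2, j', ?_, hrtg, hzj'⟩
            rw [hlx]
            exact hR
        · refine Or.inr ⟨i', j', mem_mSdown_iff.2 ⟨hxi', ?_⟩, hij', hzj'⟩
          exact (sup_le_sup_right h1 _).trans hy4
  · rcases h2 with h2 | ⟨i', j', hyi', hij', hzj'⟩
    · by_cases hy : ∃ t, y ∈ Set.Icc (u t) (v t)
      · obtain ⟨t, hyt⟩ := hy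
        rw [mhigh_of_mem hdisj hyt] at hyj
        rw [mlow_of_mem hdisj hyt] at h2
        by_cases hzt : mhigh u v z ∈ Set.Icc (u t) (v t)
        · refine Or.inr ⟨i, j, hxi, hij, ?_⟩
          rw [mhigh_of_mem hdisj (mem_of_mhigh_mem hdisj hzt)]
          exact hyj
        · exact Or.inr ⟨i, t, hxi, hij.tail (mR_of_sup hIcc hdisj hyj),
            mem_mSup_iff.2 ⟨hzt, le_inf h2 (hIcc t)⟩⟩
      · rw [mhigh_of_not hy] at hyj
        rw [mlow_of_not hy] at h2
        obtain ⟨hy1, hy2⟩ := mem_mSup_iff.1 hyj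
        by_cases hzj : mhigh u v z ∈ Set.Icc (u j) (v j)
        · have hhz : mhigh u v z = v j := mhigh_of_mem hdisj (mem_of_mhigh_mem hdisj hzj)
          rcases hij.cases_tail with he | ⟨j0, hrtg, hR⟩
          · subst he
            left
            rw [hhz]
            exact le_sup_left.trans (mem_mSdown_iff.1 hxi).2
          · refine Or.inr ⟨i, j0, hxi, hrtg, ?_⟩
            rw [hhz]
            obtain ⟨hR1, hR2⟩ := mem_mSdown_iff.1 hR
            refine mem_mSup_iff.2 ⟨?_, le_inf (le_sup_left.trans hR2) (hIcc j0)⟩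
            intro hmem
            have e := eq_of_v_mem hIcc hdisj hmem
            rw [e] at hR1
            exact hR1 (Set.mem_Icc.2 ⟨le_rfl, hIcc j0⟩)
        · exact Or.inr ⟨i, j, hxi, hij,
            mem_mSup_iff.2 ⟨hzj, le_inf ((hy2.trans inf_le_left).trans h2) (hIcc j)⟩⟩
    · have b1 := bridge1 hIcc hdisj hyj hyi'
      exact Or.inr ⟨i, j', hxi, (hij.trans b1.to_reflTransGen).trans hij', hzj'⟩

lemma mle_antisymm (hIcc : ∀ i, u i ≤ v i)
    (hdisj : Pairwise fun i j => Disjoint (Set.Icc (u i) (v i)) (Set.Icc (u j) (v j)))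
    (hnc : ¬ ∃ (m : ℕ) (c : Fin (m + 2) → Fin k), Function.Injective c ∧
      ∀ j : Fin (m + 2), u (c j) ∈ mSdown u v (c (j + 1)))
    {x y : L} (hxy : mle u v x y) (hyx : mle u v y x) : mrel u v x y := by
  have noTG : ∀ i, ¬ Relation.TransGen (mR u v) i i :=
    fun i h => hnc (crown_of_transGen hIcc h)
  rw [mle_iff_rtg] at hxy hyx
  rcases hxy with h1 | ⟨i, j, hxi, hij, hyj⟩
  · rcases hyx with h1' | ⟨i', j', hyi', hij', hxj'⟩
    · by_cases hx : ∃ p, x ∈ Set.Icc (u p) (v p)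
      · obtain ⟨p, hxp⟩ := hx
        rw [mlow_of_mem hdisj hxp] at h1
        rw [mhigh_of_mem hdisj hxp] at h1'
        by_cases hy : ∃ t, y ∈ Set.Icc (u t) (v t)
        · obtain ⟨t, hyt⟩ := hy
          rw [mhigh_of_mem hdisj hyt] at h1
          rw [mlow_of_mem hdisj hyt] at h1'
          rcases eq_or_ne p t with rfl | hpt
          · exact Or.inr ⟨p, hxp, hyt⟩
          · exact absurd (Relation.TransGen.head (mR_intro hIcc hdisj hpt h1)
              (Relation.TransGen.single (mR_intro hIcc hdisj (Ne.symm hpt) h1'))) (noTG p)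
        · rw [mhigh_of_not hy] at h1
          rw [mlow_of_not hy] at h1'
          exact absurd ⟨p, Set.mem_Icc.2 ⟨h1, h1'⟩⟩ hy
      · rw [mlow_of_not hx] at h1
        rw [mhigh_of_not hx] at h1'
        by_cases hy : ∃ t, y ∈ Set.Icc (u t) (v t)
        · obtain ⟨t, hyt⟩ := hy
          rw [mhigh_of_mem hdisj hyt] at h1
          rw [mlow_of_mem hdisj hyt] at h1'
          exact absurd ⟨t, Set.mem_Icc.2 ⟨h1', h1⟩⟩ hx
        · rw [mhigh_of_not hy] at h1
          rw [mlow_of_not hy] at h1'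
          exact Or.inl (le_antisymm h1 h1')
    · rcases bridge2 hIcc hdisj h1 hyi' hxj' with htg | hm
      · exact absurd (htg.trans_left hij') (noTG j')
      · exact mrel_symm hm
  · rcases hyx with h1' | ⟨i', j', hyi', hij', hxj'⟩
    · rcases bridge2 hIcc hdisj h1' hxi hyj with htg | hm
      · exact absurd (htg.trans_left hij) (noTG j)
      · exact hm
    · exact absurd (((Relation.TransGen.trans_right hij (bridge1 hIcc hdisj hyj hyi')).trans_left
        hij').trans (bridge1 hIcc hdisj hxj' hxi)) (noTG i)

end Aux4

/-- For a finite lattice `L` and an interval relation `θ = θ_{S₁,…,Sₖ}`,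
`≤_θ` is a partial order on `L/θ` iff there is no Penrose crown (of any order `l ≥ 2`) among
the intervals `S₁, …, Sₖ`. -/
theorem mLeQ_isOrder_iff_no_penrose_crown {L : Type*} [Lattice L] [Finite L] {k : ℕ}
    (u v : Fin k → L) (hIcc : ∀ i, u i ≤ v i)
    (hdisj : Pairwise fun i j => Disjoint (Set.Icc (u i) (v i)) (Set.Icc (u j) (v j))) :
    (Reflexive (mLeQ u v hdisj) ∧ Transitive (mLeQ u v hdisj) ∧
      (∀ a b : Quotient (mrelSetoid u v hdisj),
        mLeQ u v hdisj a b → mLeQ u v hdisj b a → a = b)) ↔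
    ¬ ∃ (m : ℕ) (c : Fin (m + 2) → Fin k), Function.Injective c ∧
        ∀ j : Fin (m + 2), u (c j) ∈ mSdown u v (c (j + 1)) := by
  constructor
  · rintro ⟨hrefl, htrans, hanti⟩ ⟨m, c, hinj, hcrown⟩
    have hstep : ∀ j : Fin (m + 2), mLeQ u v hdisj
        (Quotient.mk (mrelSetoid u v hdisj) (u (c j)))
        (Quotient.mk (mrelSetoid u v hdisj) (u (c (j + 1)))) := by
      intro j
      refine ⟨_, _, rfl, rfl, Or.inl ?_⟩
      rw [mlow_of_mem hdisj (Set.mem_Icc.2 ⟨le_rfl, hIcc (c j)⟩),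
        mhigh_of_mem hdisj (Set.mem_Icc.2 ⟨le_rfl, hIcc (c (j + 1))⟩)]
      exact le_sup_left.trans (mem_mSdown_iff.1 (hcrown j)).2
    have hchain : ∀ t, ∀ ht : t < m + 2, mLeQ u v hdisj
        (Quotient.mk (mrelSetoid u v hdisj) (u (c 0)))
        (Quotient.mk (mrelSetoid u v hdisj) (u (c ⟨t, ht⟩))) := by
      intro t
      induction t with
      | zero =>
        intro ht
        have e : (⟨0, ht⟩ : Fin (m + 2)) = 0 := by apply Fin.ext; simp
        rw [e]
        exact hrefl _
      | succ t ih =>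
        intro ht
        have ht' : t < m + 2 := by omega
        have he : (⟨t, ht'⟩ : Fin (m + 2)) + 1 = ⟨t + 1, ht⟩ := by
          apply Fin.ext
          simp [Fin.add_def, Nat.mod_eq_of_lt ht]
        exact htrans (ih ht') (he ▸ hstep ⟨t, ht'⟩)
    have hlast := hchain (m + 1) (by omega)
    have hwrap : mLeQ u v hdisj
        (Quotient.mk (mrelSetoid u v hdisj) (u (c ⟨m + 1, by omega⟩)))
        (Quotient.mk (mrelSetoid u v hdisj) (u (c 0))) := by
      have he : (⟨m + 1, by omega⟩ : Fin (m + 2)) + 1 = 0 := by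
        apply Fin.ext
        simp [Fin.add_def]
      have h := hstep ⟨m + 1, by omega⟩
      rwa [he] at h
    have heq := hanti _ _ hlast hwrap
    have hmm : mrel u v (u (c 0)) (u (c ⟨m + 1, by omega⟩)) := Quotient.exact heq
    have hne : c 0 ≠ c ⟨m + 1, by omega⟩ := by
      intro he
      have := hinj he
      rw [Fin.ext_iff] at this
      simp at this
    rcases hmm with he | ⟨i0, hm1, hm2⟩
    · exact hne (interval_eq hdisj (Set.mem_Icc.2 ⟨le_rfl, hIcc _⟩)
        (Set.mem_Icc.2 ⟨he.ge, he.le.trans (hIcc _)⟩))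
    · exact hne ((eq_of_u_mem hIcc hdisj hm1).trans (eq_of_u_mem hIcc hdisj hm2).symm)
  · intro hnc
    refine ⟨?_, ?_, ?_⟩
    · intro a
      obtain ⟨x, rfl⟩ := Quotient.exists_rep a
      exact ⟨x, x, rfl, rfl, Or.inl (mlow_le_mhigh hIcc hdisj x)⟩
    · intro a b c h1 h2
      obtain ⟨x, y, rfl, rfl, hxy⟩ := h1
      obtain ⟨y', z, hy, rfl, hyz⟩ := h2
      have hyy : mrel u v y y' := Quotient.exact hy
      exact ⟨x, z, rfl, rfl, mle_trans hIcc hdisj hxy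
        ((mle_congr hdisj hyy (Or.inl rfl)).mpr hyz)⟩
    · intro a b h1 h2
      obtain ⟨x, y, rfl, rfl, hxy⟩ := h1
      obtain ⟨y', x', hy, hx, hyx⟩ := h2
      have hyy : mrel u v y y' := Quotient.exact hy
      have hxx : mrel u v x x' := Quotient.exact hx
      have hyx' : mle u v y x := (mle_congr hdisj hyy hxx).mpr hyx
      exact Quotient.sound (mle_antisymm hIcc hdisj hnc hxy hyx')
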